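/- arXiv:2103.14851 — 3 statements merged into one kernel-verified Lean document; each statement's English description precedes it below -/
import Mathlib

section
/- For integers $k \ge 1$, $i \ge 0$, $e \ge 1$, define $f_i(k,e) = \sum_{j=0}^{e} \binom{e-j}{i}\binom{k+e-i-2}{j} t^j (1-t)^{e-i-j}$ in $\mathbb{Q}[t]$ (where binomials with negative upper argument follow the convention $\binom{n-1}{n}=1$ if $n=0$ and $0$ otherwise, and negative powers of $(1-t)$ do not occur when $i \le e$; take the terms to vanish when $e-i-j<0$ by treating $(1-t)^{e-i-j}$ via the polynomial convention of only summing valid terms). Then $f_i(k+1,e) = f_i(k,e) + t\, f_i(k+1,e-1)$. -/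
open Polynomial Finset

lemma key (i m N : ℕ) :
    (∑ j ∈ Finset.range (m+2), (((i+m+1 - j).choose i : ℚ) * (((N+1).choose j : ℕ) : ℚ)) • (X^j * (1-X)^(m+1-j)) : Polynomial ℚ)
    = ∑ j ∈ Finset.range (m+2), (((i+m+1 - j).choose i : ℚ) * ((N.choose j : ℕ) : ℚ)) • (X^j * (1-X)^(m+1-j))
      + X * ∑ j ∈ Finset.range (m+1), (((i+m - j).choose i : ℚ) * ((N.choose j : ℕ) : ℚ)) • (X^j * (1-X)^(m-j)) := by
  rw [Finset.sum_range_succ' _ (m+1), Finset.sum_range_succ' _ (m+1)]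
  simp only [Nat.succ_sub_succ, Nat.choose_succ_succ, Nat.cast_add, Nat.choose_zero_right,
    Nat.cast_one, mul_one, pow_zero, one_mul, Nat.sub_zero, mul_add, add_smul,
    Finset.sum_add_distrib, Finset.mul_sum]
  simp only [mul_smul_comm, ← mul_assoc, ← pow_succ', Nat.succ_eq_add_one]
  ring

/-- The polynomial `f_i(k,e) ∈ ℚ[t]` of Hirose–Murahara–Ono, with the sum restricted to
indices `j` with `0 ≤ j ≤ e - i` so that all exponents of `(1-t)` are nonnegative, and with
the Pascal-type convention for binomial coefficients (truncated subtraction realizes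
`binom(n-1,n) = 1` if `n = 0` and `0` otherwise). -/
noncomputable def fHMO (i k e : ℕ) : Polynomial ℚ :=
  ∑ j ∈ Finset.range (e - i + 1),
    (((e - j).choose i : ℚ) * ((k + e - i - 2).choose j : ℚ)) •
      (X ^ j * (1 - X) ^ (e - i - j))

theorem stmt0 (k i e : ℕ) (hk : 1 ≤ k) (he : 1 ≤ e) :
    fHMO i (k + 1) e = fHMO i k e + X * fHMO i (k + 1) (e - 1) := by
  rcases le_or_gt e i with h | h
  · have h0 : e - i = 0 := by omega
    have h1 : e - 1 - i = 0 := by omega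
    have h2 : (e - 1).choose i = 0 := Nat.choose_eq_zero_of_lt (by omega)
    simp [fHMO, h0, h1, h2]
  · obtain ⟨m, rfl⟩ : ∃ m, e = i + m + 1 := ⟨e - i - 1, by omega⟩
    obtain ⟨k', rfl⟩ : ∃ k', k = k' + 1 := ⟨k - 1, by omega⟩
    have e1 : fHMO i (k' + 1 + 1) (i + m + 1)
        = ∑ j ∈ Finset.range (m+2), (((i+m+1 - j).choose i : ℚ) * ((((k'+m)+1).choose j : ℕ) : ℚ)) • (X^j * (1-X)^(m+1-j)) := by
      unfold fHMO
      have hr : i + m + 1 - i + 1 = m + 2 := by omega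
      rw [hr]
      refine Finset.sum_congr rfl fun j hj => ?_
      have h1 : k' + 1 + 1 + (i + m + 1) - i - 2 = k' + m + 1 := by omega
      have h2 : i + m + 1 - i - j = m + 1 - j := by omega
      rw [h1, h2]
    have e2 : fHMO i (k' + 1) (i + m + 1)
        = ∑ j ∈ Finset.range (m+2), (((i+m+1 - j).choose i : ℚ) * (((k'+m).choose j : ℕ) : ℚ)) • (X^j * (1-X)^(m+1-j)) := by
      unfold fHMO
      have hr : i + m + 1 - i + 1 = m + 2 := by omega
      rw [hr]
      refine Finset.sum_congr rfl fun j hj => ?_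
      have h1 : k' + 1 + (i + m + 1) - i - 2 = k' + m := by omega
      have h2 : i + m + 1 - i - j = m + 1 - j := by omega
      rw [h1, h2]
    have e3 : fHMO i (k' + 1 + 1) (i + m + 1 - 1)
        = ∑ j ∈ Finset.range (m+1), (((i+m - j).choose i : ℚ) * (((k'+m).choose j : ℕ) : ℚ)) • (X^j * (1-X)^(m-j)) := by
      have hm : i + m + 1 - 1 = i + m := by omega
      rw [hm]
      unfold fHMO
      have hr : i + m - i + 1 = m + 1 := by omega
      rw [hr]
      refine Finset.sum_congr rfl fun j hj => ?_
      have h1 : k' + 1 + 1 + (i + m) - i - 2 = k' + m := by omega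
      have h2 : i + m - i - j = m - j := by omega
      rw [h1, h2]
    rw [e1, e2, e3]
    exact key i m (k' + m)
end

section
/- For a positive integer $k$ and nonnegative integers $e$ and $i$, with $f_i(k,e) = \sum_{j=0}^{e-i} \binom{e-j}{i}\binom{k+e-i-2}{j} t^j (1-t)^{e-i-j} \in \mathbb{Q}[t]$, one has the recurrence $f_{i+1}(k+1,e) - (1-t)f_{i+1}(k+2,e) + f_i(k,e) - f_i(k+1,e) = 0$. -/
open Polynomial Finset

lemma fHMO_key (i d K : ℕ) :
    (∑ j ∈ Finset.range (d + 1),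
        (((i + d + 1 - j).choose (i + 1) : ℚ) * ((K + d).choose j : ℚ)) •
          ((X : ℚ[X]) ^ j * (1 - X) ^ (d - j)))
      - (1 - X) * (∑ j ∈ Finset.range (d + 1),
        (((i + d + 1 - j).choose (i + 1) : ℚ) * ((K + d + 1).choose j : ℚ)) •
          ((X : ℚ[X]) ^ j * (1 - X) ^ (d - j)))
      + (∑ j ∈ Finset.range (d + 2),
        (((i + d + 1 - j).choose i : ℚ) * ((K + d).choose j : ℚ)) •
          ((X : ℚ[X]) ^ j * (1 - X) ^ (d + 1 - j)))
      - (∑ j ∈ Finset.range (d + 2),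
        (((i + d + 1 - j).choose i : ℚ) * ((K + d + 1).choose j : ℚ)) •
          ((X : ℚ[X]) ^ j * (1 - X) ^ (d + 1 - j))) = 0 := by
  have hA : (∑ j ∈ Finset.range (d + 2),
        (((i + d + 1 - j).choose i : ℚ) * ((K + d).choose j : ℚ)) •
          ((X : ℚ[X]) ^ j * (1 - X) ^ (d + 1 - j)))
      - (∑ j ∈ Finset.range (d + 2),
        (((i + d + 1 - j).choose i : ℚ) * ((K + d + 1).choose j : ℚ)) •
          ((X : ℚ[X]) ^ j * (1 - X) ^ (d + 1 - j)))
      = -∑ j ∈ Finset.range (d + 1),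
        (((i + d - j).choose i : ℚ) * ((K + d).choose j : ℚ)) •
          ((X : ℚ[X]) ^ (j + 1) * (1 - X) ^ (d - j)) := by
    rw [← Finset.sum_sub_distrib, Finset.sum_range_succ', ← Finset.sum_neg_distrib]
    simp only [Nat.choose_zero_right, Nat.cast_one, mul_one, sub_self, add_zero]
    refine Finset.sum_congr rfl fun j hj => ?_
    rw [show i + d + 1 - (j + 1) = i + d - j from by omega,
        show d + 1 - (j + 1) = d - j from by omega,
        Nat.choose_succ_succ (K + d) j]
    push_cast
    module
  have hB : (∑ j ∈ Finset.range (d + 1),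
        (((i + d + 1 - j).choose (i + 1) : ℚ) * ((K + d).choose j : ℚ)) •
          ((X : ℚ[X]) ^ j * (1 - X) ^ (d - j)))
      - (∑ j ∈ Finset.range (d + 1),
        (((i + d + 1 - j).choose (i + 1) : ℚ) * ((K + d).choose j : ℚ)) •
          ((X : ℚ[X]) ^ j * (1 - X) ^ (d + 1 - j)))
      = ∑ j ∈ Finset.range (d + 1),
        (((i + d + 1 - j).choose (i + 1) : ℚ) * ((K + d).choose j : ℚ)) •
          ((X : ℚ[X]) ^ (j + 1) * (1 - X) ^ (d - j)) := by
    rw [← Finset.sum_sub_distrib]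
    refine Finset.sum_congr rfl fun j hj => ?_
    have hj' : j ≤ d := Nat.lt_succ_iff.mp (Finset.mem_range.mp hj)
    rw [← smul_sub]
    congr 1
    rw [show d + 1 - j = (d - j) + 1 from by omega, pow_succ, pow_succ]
    ring
  have hC : (1 - (X : ℚ[X])) * (∑ j ∈ Finset.range (d + 1),
        (((i + d + 1 - j).choose (i + 1) : ℚ) * ((K + d + 1).choose j : ℚ)) •
          ((X : ℚ[X]) ^ j * (1 - X) ^ (d - j)))
      = (∑ j ∈ Finset.range (d + 1),
        (((i + d + 1 - j).choose (i + 1) : ℚ) * ((K + d).choose j : ℚ)) •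
          ((X : ℚ[X]) ^ j * (1 - X) ^ (d + 1 - j)))
      + ∑ j ∈ Finset.range (d + 1),
        (((i + d - j).choose (i + 1) : ℚ) * ((K + d).choose j : ℚ)) •
          ((X : ℚ[X]) ^ (j + 1) * (1 - X) ^ (d - j)) := by
    have step1 : (1 - (X : ℚ[X])) * (∑ j ∈ Finset.range (d + 1),
          (((i + d + 1 - j).choose (i + 1) : ℚ) * ((K + d + 1).choose j : ℚ)) •
            ((X : ℚ[X]) ^ j * (1 - X) ^ (d - j)))
        = ∑ j ∈ Finset.range (d + 1),
          (((i + d + 1 - j).choose (i + 1) : ℚ) * ((K + d + 1).choose j : ℚ)) •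
            ((X : ℚ[X]) ^ j * (1 - X) ^ (d + 1 - j)) := by
      rw [Finset.mul_sum]
      refine Finset.sum_congr rfl fun j hj => ?_
      have hj' : j ≤ d := Nat.lt_succ_iff.mp (Finset.mem_range.mp hj)
      rw [mul_smul_comm]
      congr 1
      rw [show d + 1 - j = (d - j) + 1 from by omega, pow_succ]
      ring
    rw [step1, ← sub_eq_iff_eq_add', ← Finset.sum_sub_distrib, Finset.sum_range_succ']
    simp only [Nat.choose_zero_right, Nat.cast_one, mul_one, sub_self, add_zero]
    rw [Finset.sum_range_succ, Nat.add_sub_cancel, Nat.choose_succ_self]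
    simp only [Nat.cast_zero, zero_mul, zero_smul, add_zero]
    refine Finset.sum_congr rfl fun j hj => ?_
    rw [show i + d + 1 - (j + 1) = i + d - j from by omega,
        show d + 1 - (j + 1) = d - j from by omega,
        Nat.choose_succ_succ (K + d) j]
    push_cast
    module
  have hfinal : (∑ j ∈ Finset.range (d + 1),
        (((i + d + 1 - j).choose (i + 1) : ℚ) * ((K + d).choose j : ℚ)) •
          ((X : ℚ[X]) ^ (j + 1) * (1 - X) ^ (d - j)))
      - (∑ j ∈ Finset.range (d + 1),
        (((i + d - j).choose (i + 1) : ℚ) * ((K + d).choose j : ℚ)) •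
          ((X : ℚ[X]) ^ (j + 1) * (1 - X) ^ (d - j)))
      - (∑ j ∈ Finset.range (d + 1),
        (((i + d - j).choose i : ℚ) * ((K + d).choose j : ℚ)) •
          ((X : ℚ[X]) ^ (j + 1) * (1 - X) ^ (d - j))) = 0 := by
    rw [← Finset.sum_sub_distrib, ← Finset.sum_sub_distrib]
    refine Finset.sum_eq_zero fun j hj => ?_
    have hj' : j ≤ d := Nat.lt_succ_iff.mp (Finset.mem_range.mp hj)
    rw [show i + d + 1 - j = (i + d - j) + 1 from by omega,
        Nat.choose_succ_succ (i + d - j) i]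
    push_cast
    module
  linear_combination hA + hB - hC + hfinal

theorem stmt1 (k i e : ℕ) (hk : 1 ≤ k) :
    fHMO (i + 1) (k + 1) e - (1 - X) * fHMO (i + 1) (k + 2) e
      + fHMO i k e - fHMO i (k + 1) e = 0 := by
  obtain ⟨K, rfl⟩ : ∃ K, k = K + 1 := ⟨k - 1, by omega⟩
  rcases le_or_gt e i with h | h
  · have h1 : e - (i + 1) = 0 := by omega
    have h2 : e - i = 0 := by omega
    have h3 : e.choose (i + 1) = 0 := Nat.choose_eq_zero_of_lt (by omega)
    simp only [fHMO, h1, h2, zero_add, Finset.sum_range_one, Nat.sub_zero, h3,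
      Nat.choose_zero_right, Nat.cast_one, Nat.cast_zero, mul_one, zero_mul, one_mul,
      zero_smul, one_smul, pow_zero, mul_zero, sub_zero, smul_eq_mul]
    ring
  · obtain ⟨d, rfl⟩ : ∃ d, e = i + d + 1 := ⟨e - i - 1, by omega⟩
    have e1 : i + d + 1 - (i + 1) = d := by omega
    have e2 : i + d + 1 - i = d + 1 := by omega
    have e3 : K + 1 + 1 + (i + d + 1) - (i + 1) - 2 = K + d := by omega
    have e4 : K + 1 + 2 + (i + d + 1) - (i + 1) - 2 = K + d + 1 := by omega
    have e5 : K + 1 + (i + d + 1) - i - 2 = K + d := by omega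
    have e6 : K + 1 + 1 + (i + d + 1) - i - 2 = K + d + 1 := by omega
    simp only [fHMO, e1, e2, e3, e4, e5, e6]
    exact fHMO_key i d K
end

section
/- For positive integers $k > r \ge 1$, the following polynomial identity holds in $\mathbb{Q}[t]$: $\sum_{e=0}^{r-2} (-1)^{r-e} \Big(\sum_{j=0}^{e} \binom{k-r+e}{j} t^j (1-t)^{e-j}\Big) \binom{k}{r-e-1} = \sum_{j=0}^{r-1} \Big(\binom{k-1}{j} + (-1)^r \binom{k-1}{r-1-j}\Big) t^j (1-t)^{r-1-j}$. -/
open Polynomial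

lemma hockey (a : ℕ) : ∀ n, ∑ s ∈ Finset.range (n+1), (a+s).choose s = (a+n+1).choose n := by
  intro n
  induction n with
  | zero => simp
  | succ n ih =>
    rw [Finset.sum_range_succ, ih]
    have h2 : a + (n+1) = a + n + 1 := by omega
    rw [h2]
    conv_rhs => rw [Nat.choose_succ_succ]

lemma L4 (a i j : ℕ) (h : j ≤ i) :
    (a+i).choose i * i.choose j = (a+j).choose j * (a+i).choose (i-j) := by
  have key : (((a+i).choose i : ℚ) * i.choose j) = ((a+j).choose j : ℚ) * (a+i).choose (i-j) := by
    rw [Nat.cast_choose ℚ (by omega : i ≤ a + i),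
        Nat.cast_choose ℚ h,
        Nat.cast_choose ℚ (by omega : j ≤ a + j),
        Nat.cast_choose ℚ (by omega : i - j ≤ a + i)]
    have e1 : a + i - i = a := by omega
    have e2 : a + j - j = a := by omega
    have e3 : a + i - (i - j) = a + j := by omega
    rw [e1, e2, e3]
    have f0 : ∀ m : ℕ, ((m.factorial : ℚ)) ≠ 0 := fun m => Nat.cast_ne_zero.mpr (Nat.factorial_ne_zero m)
    field_simp
  exact_mod_cast key

lemma alt2 (c : ℕ) : ∀ d, ∑ t ∈ Finset.range d, (-1:ℚ)^t * (c+1).choose (t+1)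
    = 1 - (-1)^d * c.choose d := by
  intro d
  induction d with
  | zero => simp
  | succ d ih =>
    rw [Finset.sum_range_succ, ih, Nat.choose_succ_succ c d]
    push_cast
    ring

lemma innerSum (a : ℕ) : ∀ n, ∀ j ≤ n, ∑ i ∈ Finset.range (n+1), (a+i).choose i * i.choose j
    = (a+j).choose j * (a+n+1).choose (n-j) := by
  intro n
  induction n with
  | zero =>
    intro j hj
    interval_cases j
    simp
  | succ n ih =>
    intro j hj
    rw [Finset.sum_range_succ]
    rcases Nat.lt_or_ge j (n+1) with hlt | hge
    · have hj' : j ≤ n := by omega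
      rw [ih j hj']
      have key := L4 a (n+1) j (by omega)
      have e1 : a + (n+1) = a + n + 1 := by omega
      have e2 : n + 1 - j = (n - j) + 1 := by omega
      rw [e1, e2] at key
      rw [e1, e2]
      conv_rhs => rw [Nat.choose_succ_succ (a+n+1) (n-j)]
      rw [key]
      ring
    · have hj' : j = n + 1 := by omega
      subst hj'
      have z : ∑ i ∈ Finset.range (n+1), (a+i).choose i * i.choose (n+1) = 0 := by
        apply Finset.sum_eq_zero
        intro i hi
        rw [Finset.mem_range] at hi
        rw [Nat.choose_eq_zero_of_lt (show i < n+1 by omega)]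
        ring
      rw [z]
      simp

lemma L1key (a e : ℕ) (x : ℚ) :
    ∑ j ∈ Finset.range (e+2), ((a+e+2).choose j : ℚ) * (x^j * (1-x)^(e+1-j))
    = ∑ j ∈ Finset.range (e+1), ((a+e+1).choose j : ℚ) * (x^j * (1-x)^(e-j))
      + ((a+e+1).choose (e+1) : ℚ) * x^(e+1) := by
  rw [Finset.sum_range_succ']
  have expand : ∀ j ∈ Finset.range (e+1), ((a+e+2).choose (j+1) : ℚ) * (x^(j+1) * (1-x)^(e+1-(j+1)))
      = x * (((a+e+1).choose j : ℚ) * (x^j * (1-x)^(e-j)))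
        + ((a+e+1).choose (j+1) : ℚ) * (x^(j+1) * (1-x)^(e-j)) := by
    intro j hj
    have h1 : a+e+2 = (a+e+1)+1 := by omega
    have h2 : e+1-(j+1) = e - j := by omega
    rw [h1, h2, Nat.choose_succ_succ (a+e+1) j]
    push_cast
    ring
  rw [Finset.sum_congr rfl expand, Finset.sum_add_distrib]
  have reasm : (∑ j ∈ Finset.range (e+1), ((a+e+1).choose (j+1) : ℚ) * (x^(j+1) * (1-x)^(e-j)))
      + ((a+e+2).choose 0 : ℚ) * (x^0 * (1-x)^(e+1-0))
      = (∑ j ∈ Finset.range (e+1), (1-x) * (((a+e+1).choose j : ℚ) * (x^j * (1-x)^(e-j))))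
        + ((a+e+1).choose (e+1) : ℚ) * x^(e+1) := by
    have assemble : (∑ j ∈ Finset.range (e+1), ((a+e+1).choose (j+1) : ℚ) * (x^(j+1) * (1-x)^(e-j)))
        + ((a+e+2).choose 0 : ℚ) * (x^0 * (1-x)^(e+1-0))
        = ∑ j ∈ Finset.range (e+2), ((a+e+1).choose j : ℚ) * (x^j * (1-x)^(e+1-j)) := by
      conv_rhs => rw [Finset.sum_range_succ']
      have h2 : ∀ j ∈ Finset.range (e+1), ((a+e+1).choose (j+1) : ℚ) * (x^(j+1) * (1-x)^(e+1-(j+1)))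
          = ((a+e+1).choose (j+1) : ℚ) * (x^(j+1) * (1-x)^(e-j)) := by
        intro j hj
        have : e+1-(j+1) = e - j := by omega
        rw [this]
      rw [Finset.sum_congr rfl h2]
      simp
    rw [assemble, Finset.sum_range_succ]
    have peel : ∀ j ∈ Finset.range (e+1), ((a+e+1).choose j : ℚ) * (x^j * (1-x)^(e+1-j))
        = (1-x) * (((a+e+1).choose j : ℚ) * (x^j * (1-x)^(e-j))) := by
      intro j hj
      have h3 : e+1-j = (e-j)+1 := by
        have := Finset.mem_range.mp hj; omega
      rw [h3]
      ring
    rw [Finset.sum_congr rfl peel]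
    simp
  rw [add_assoc, reasm, ← Finset.mul_sum, ← Finset.mul_sum]
  ring

lemma L1 (a : ℕ) (x : ℚ) : ∀ e, ∑ j ∈ Finset.range (e+1), ((a+1+e).choose j : ℚ) * (x^j * (1-x)^(e-j))
    = ∑ i ∈ Finset.range (e+1), ((a+i).choose i : ℚ) * x^i := by
  intro e
  induction e with
  | zero => simp
  | succ e ih =>
    have h1 : a+1+(e+1) = a+e+2 := by omega
    have h2 : a+1+e = a+e+1 := by omega
    rw [h1]
    rw [L1key a e x]
    rw [← h2, ih, Finset.sum_range_succ (fun i => ((a+i).choose i : ℚ) * x^i) (e+1)]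
    have h3 : a+(e+1) = a+e+1 := by omega
    rw [h3, h2]

lemma pow_expand (x : ℚ) (i : ℕ) : (1-x)^i = ∑ j ∈ Finset.range (i+1), (i.choose j : ℚ) * (-x)^j := by
  calc (1-x)^i = (-x+1)^i := by ring
  _ = ∑ k ∈ Finset.range (i+1), (-x)^k * 1^(i-k) * (i.choose k : ℚ) := add_pow _ _ _
  _ = ∑ k ∈ Finset.range (i+1), (i.choose k : ℚ) * (-x)^k := by
      apply Finset.sum_congr rfl
      intro k _
      rw [one_pow]
      ring

lemma L5 (a n : ℕ) (x : ℚ) :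
    ∑ i ∈ Finset.range (n+1), ((a+i).choose i : ℚ) * (1-x)^i
    = ∑ j ∈ Finset.range (n+1), (-1:ℚ)^j * (((a+j).choose j : ℚ) * ((a+n+1).choose (n-j) : ℚ)) * x^j := by
  have ext : ∀ i ∈ Finset.range (n+1), ((a+i).choose i : ℚ) * (1-x)^i
      = ∑ j ∈ Finset.range (n+1), ((a+i).choose i : ℚ) * ((i.choose j : ℚ) * (-x)^j) := by
    intro i hi
    rw [pow_expand, Finset.mul_sum]
    apply Finset.sum_subset (Finset.range_subset_range.mpr (by simp at hi; omega))
    intro j hj hj2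
    have hij : i < j := by simp at hj hj2 ⊢; omega
    rw [Nat.choose_eq_zero_of_lt hij]
    simp
  rw [Finset.sum_congr rfl ext, Finset.sum_comm]
  apply Finset.sum_congr rfl
  intro j hj
  have hj' : j ≤ n := by simp at hj; omega
  calc ∑ i ∈ Finset.range (n+1), ((a+i).choose i : ℚ) * ((i.choose j : ℚ) * (-x)^j)
      = (∑ i ∈ Finset.range (n+1), (((a+i).choose i * i.choose j : ℕ) : ℚ)) * (-x)^j := by
        rw [Finset.sum_mul]
        apply Finset.sum_congr rfl
        intro i _
        push_cast
        ring
  _ = (((a+j).choose j * (a+n+1).choose (n-j) : ℕ) : ℚ) * (-x)^j := by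
        rw [← Nat.cast_sum, innerSum a n j hj']
  _ = (-1:ℚ)^j * (((a+j).choose j : ℚ) * ((a+n+1).choose (n-j) : ℚ)) * x^j := by
        push_cast
        rw [neg_pow]
        ring

lemma inner2 (c s i : ℕ) (hi : i ≤ s) :
    ∑ e ∈ Finset.Ico i s, (-1:ℚ)^(s+1-e) * (c+1).choose (s-e)
    = 1 - (-1)^(s-i) * c.choose (s-i) := by
  rw [Finset.sum_Ico_eq_sum_range]
  have hrw : ∀ t ∈ Finset.range (s - i), (-1:ℚ)^(s+1-(i+t)) * ((c+1).choose (s-(i+t)) : ℚ)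
      = (fun u => (-1:ℚ)^(u+2) * ((c+1).choose (u+1) : ℚ)) ((s-i) - 1 - t) := by
    intro t ht
    simp only [Finset.mem_range] at ht
    have h1 : s+1-(i+t) = ((s-i)-1-t)+2 := by omega
    have h2 : s-(i+t) = ((s-i)-1-t)+1 := by omega
    rw [h1, h2]
  rw [Finset.sum_congr rfl hrw,
    Finset.sum_range_reflect (fun u => (-1:ℚ)^(u+2) * ((c+1).choose (u+1) : ℚ)) (s-i)]
  have : ∀ t ∈ Finset.range (s-i), (fun u => (-1:ℚ)^(u+2) * ((c+1).choose (u+1) : ℚ)) t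
      = (-1:ℚ)^t * ((c+1).choose (t+1) : ℚ) := by
    intro t _
    simp only []
    rw [pow_add]
    norm_num
  rw [Finset.sum_congr rfl this, alt2]

theorem stmt13 (k r : ℕ) (hr : 1 ≤ r) (hkr : r < k) :
    ∑ e ∈ Finset.range (r - 1),
        (-1 : Polynomial ℚ) ^ (r - e) *
          (∑ j ∈ Finset.range (e + 1),
            C (((k - r + e).choose j : ℚ)) * (X ^ j * (1 - X) ^ (e - j))) *
          C ((k.choose (r - e - 1) : ℚ)) =
      ∑ j ∈ Finset.range r,
        (C (((k - 1).choose j : ℚ)) + (-1 : Polynomial ℚ) ^ r * C (((k - 1).choose (r - 1 - j) : ℚ)))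
          * (X ^ j * (1 - X) ^ (r - 1 - j)) := by
  obtain ⟨s, rfl⟩ : ∃ s, r = s + 1 := ⟨r - 1, by omega⟩
  obtain ⟨a, rfl⟩ : ∃ a, k = s + a + 2 := ⟨k - s - 2, by omega⟩
  apply Polynomial.funext
  intro x
  simp only [eval_finset_sum, eval_mul, eval_add, eval_pow, eval_C, eval_X, eval_one, eval_sub,
    eval_neg]
  have hA : s + 1 - 1 = s := by omega
  have hB : s + a + 2 - (s + 1) = a + 1 := by omega
  have hC : s + a + 2 - 1 = s + a + 1 := by omega
  have hD : ∀ e : ℕ, s + 1 - e - 1 = s - e := by omega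
  have hE : ∀ j : ℕ, s + 1 - 1 - j = s - j := by omega
  simp only [hA, hB, hC, hD, hE]
  have hcc : s + a + 2 = (s + a + 1) + 1 := by omega
  -- Step 1: LHS inner sums via L1
  have lhs1 : ∀ e ∈ Finset.range s,
      ((-1:ℚ)^(s+1-e) * ∑ j ∈ Finset.range (e+1), ((a+1+e).choose j : ℚ) * (x^j * (1-x)^(e-j)))
        * ((s+a+2).choose (s-e) : ℚ)
      = ∑ i ∈ Finset.range (e+1),
          ((-1:ℚ)^(s+1-e) * (((s+a+1)+1).choose (s-e) : ℚ)) * (((a+i).choose i : ℚ) * x^i) := by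
    intro e _
    rw [L1 a x e, hcc, Finset.mul_sum, Finset.sum_mul]
    apply Finset.sum_congr rfl
    intro i _
    ring
  rw [Finset.sum_congr rfl lhs1]
  simp only [Finset.range_eq_Ico]
  have swap := Finset.sum_Ico_Ico_comm 0 s
    (fun i e => ((-1:ℚ)^(s+1-e) * (((s+a+1)+1).choose (s-e) : ℚ)) * (((a+i).choose i : ℚ) * x^i))
  rw [← swap]
  have lhs2 : ∀ i ∈ Finset.Ico 0 s,
      ∑ e ∈ Finset.Ico i s,
        ((-1:ℚ)^(s+1-e) * (((s+a+1)+1).choose (s-e) : ℚ)) * (((a+i).choose i : ℚ) * x^i)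
      = (((a+i).choose i : ℚ) * x^i) * (1 - (-1:ℚ)^(s-i) * ((s+a+1).choose (s-i) : ℚ)) := by
    intro i hi
    have hi' : i ≤ s := by simp at hi; omega
    rw [← Finset.sum_mul, inner2 (s+a+1) s i hi']
    ring
  rw [Finset.sum_congr rfl lhs2]
  simp only [← Finset.range_eq_Ico]
  -- Step 2: RHS
  have rhs1 : ∀ j ∈ Finset.range (s+1),
      (((s+a+1).choose j : ℚ) + (-1:ℚ)^(s+1) * ((s+a+1).choose (s-j) : ℚ)) * (x^j * (1-x)^(s-j))
      = ((s+a+1).choose j : ℚ) * (x^j * (1-x)^(s-j))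
        + (-1:ℚ)^(s+1) * (((s+a+1).choose (s-j) : ℚ) * (x^j * (1-x)^(s-j))) := by
    intro j _
    ring
  rw [Finset.sum_congr rfl rhs1, Finset.sum_add_distrib, ← Finset.mul_sum]
  have hca : a + 1 + s = s + a + 1 := by omega
  have l1 := L1 a x s
  rw [hca] at l1
  rw [l1]
  have refl1 : ∀ j ∈ Finset.range (s+1), ((s+a+1).choose (s-j) : ℚ) * (x^j * (1-x)^(s-j))
      = (fun u => (((s+a+1).choose u : ℚ)) * ((1-x)^u * x^(s-u))) ((s+1) - 1 - j) := by
    intro j hj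
    simp only [Finset.mem_range] at hj
    have h1 : (s+1)-1-j = s - j := by omega
    have h2 : s - (s-j) = j := by omega
    rw [h1]
    simp only []
    rw [h2]
    ring
  rw [Finset.sum_congr rfl refl1,
    Finset.sum_range_reflect (fun u => (((s+a+1).choose u : ℚ)) * ((1-x)^u * x^(s-u))) (s+1)]
  have l1' := L1 a (1-x) s
  simp only [sub_sub_cancel] at l1'
  rw [hca] at l1'
  rw [l1']
  have l5 := L5 a s x
  have hca2 : a + s + 1 = s + a + 1 := by omega
  rw [hca2] at l5
  rw [l5]
  -- Step 3: combine
  rw [Finset.mul_sum, ← Finset.sum_add_distrib, Finset.sum_range_succ]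
  have top : ((a+s).choose s : ℚ) * x^s
      + (-1:ℚ)^(s+1) * ((-1:ℚ)^s * (((a+s).choose s : ℚ) * (((s+a+1).choose (s-s)) : ℚ)) * x^s) = 0 := by
    have hss : s - s = 0 := by omega
    have hpow : (-1:ℚ)^(s+1) * (-1:ℚ)^s = -1 := by
      rw [← pow_add]
      have h : s+1+s = 2*s+1 := by omega
      rw [h, pow_succ, pow_mul]
      norm_num
    rw [hss]
    simp only [Nat.choose_zero_right, Nat.cast_one, mul_one]
    linear_combination (((a+s).choose s : ℚ) * x^s) * hpow
  rw [top, add_zero]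
  apply Finset.sum_congr rfl
  intro i hi
  simp only [Finset.mem_range] at hi
  have hp : (-1:ℚ)^(s+1) * (-1:ℚ)^i = -(-1:ℚ)^(s-i) := by
    obtain ⟨d, hd⟩ : ∃ d, s = i + d := ⟨s - i, by omega⟩
    subst hd
    have h1 : i + d - i = d := by omega
    rw [h1, ← pow_add]
    have h2 : i + d + 1 + i = 2*i + (d+1) := by omega
    rw [h2, pow_add, pow_mul, pow_succ]
    norm_num
    rw [pow_succ]
    ring
  linear_combination (-(((a+i).choose i : ℚ) * (((s+a+1).choose (s-i)) : ℚ) * x^i)) * hp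
end
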